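/- Let N ≥ 2 and let μ be a finite (signed) Radon measure on ℝ^N. Then for every t > 0, t · Cap({x ∈ ℝ^N : |∫ |x−y|^{-(N-1)} dμ(y)| > t}) ≤ ‖μ‖, where ‖μ‖ is the total variation norm of μ and the set is restricted to points x where ∫ |x−y|^{-(N-1)} d|μ|(y) < ∞. -/

import Mathlib

open MeasureTheory Metric Filter
open scoped ENNReal Topology NNReal

/-- The capacity (in the de la Vallée Poussin sense) associated with the kernel
`|x|^{-(N-1)}`: for compact `E`, the sup of `ν E` over positive measures `ν`
supported in `E` whose potential is everywhere at most `1`; for arbitrary sets,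
the sup over compact subsets. -/
noncomputable def rieszCap (N : ℕ) (A : Set (EuclideanSpace ℝ (Fin N))) : ℝ≥0∞ :=
  ⨆ (E : Set (EuclideanSpace ℝ (Fin N))) (_ : IsCompact E) (_ : E ⊆ A)
    (ν : Measure (EuclideanSpace ℝ (Fin N))) (_ : ν Eᶜ = 0)
    (_ : ∀ x : EuclideanSpace ℝ (Fin N),
      (∫⁻ y, (‖x - y‖₊ : ℝ≥0∞) ^ (-(N - 1 : ℝ)) ∂ν) ≤ 1), ν E

/-- The weak type capacitary inequality: for a finite signed Radon measure `μ` on `ℝ^N`,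
`t · Cap({x : |(|x|^{-(N-1)} ⋆ μ)(x)| > t}) ≤ ‖μ‖` for every `t > 0`, the set being
restricted to points where the potential of `|μ|` is finite. -/
theorem weak_type_capacitary_inequality
    (N : ℕ) (hN : 2 ≤ N) (μ : SignedMeasure (EuclideanSpace ℝ (Fin N))) :
    ∀ t : ℝ, 0 < t →
      ENNReal.ofReal t *
          rieszCap N {x |
            Integrable (fun y => ‖x - y‖ ^ (-(N - 1 : ℝ))) μ.totalVariation ∧
            t < |(∫ y, ‖x - y‖ ^ (-(N - 1 : ℝ)) ∂μ.toJordanDecomposition.posPart)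
                  - ∫ y, ‖x - y‖ ^ (-(N - 1 : ℝ)) ∂μ.toJordanDecomposition.negPart|} ≤
        μ.totalVariation Set.univ := by
  intro t ht
  set r : ℝ := -(N - 1 : ℝ) with hr
  have hrneg : r < 0 := by
    have : (2 : ℝ) ≤ N := by exact_mod_cast hN
    rw [hr]; linarith
  set tv := μ.totalVariation with htv
  haveI htvfin : IsFiniteMeasure tv := by
    constructor
    rw [htv, SignedMeasure.totalVariation, Measure.add_apply]
    exact ENNReal.add_lt_top.2 ⟨measure_lt_top _ _, measure_lt_top _ _⟩
  have hK : Measurable fun p : (EuclideanSpace ℝ (Fin N)) × (EuclideanSpace ℝ (Fin N)) =>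
      (‖p.1 - p.2‖₊ : ℝ≥0∞) ^ r := by fun_prop
  rw [rieszCap]
  simp_rw [ENNReal.mul_iSup]
  refine iSup_le fun E => iSup_le fun hE => iSup_le fun hEA => iSup_le fun ν =>
    iSup_le fun hsupp => iSup_le fun hpot => ?_
  have hEm : MeasurableSet E := hE.measurableSet
  rcases E.eq_empty_or_nonempty with rfl | ⟨x0, hx0⟩
  · simp
  -- finiteness of ν E
  obtain ⟨R, hR⟩ := hE.isBounded.subset_closedBall x0
  set b : ℝ≥0∞ := ENNReal.ofReal (max R 1) with hb
  have hb1 : (1 : ℝ≥0∞) ≤ b := by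
    rw [hb, ← ENNReal.ofReal_one]
    exact ENNReal.ofReal_le_ofReal (le_max_right _ _)
  have hbtop : b ≠ ⊤ := ENNReal.ofReal_ne_top
  have ha0 : b ^ r ≠ 0 := (ENNReal.rpow_pos (lt_of_lt_of_le one_pos hb1) hbtop).ne'
  have hatop : b ^ r ≠ ⊤ :=
    (lt_of_le_of_lt (ENNReal.rpow_le_one_of_one_le_of_neg hb1 hrneg) ENNReal.one_lt_top).ne
  have h2 : b ^ r * ν E ≤ 1 := by
    have hlb : ∀ y ∈ E, b ^ r ≤ (‖x0 - y‖₊ : ℝ≥0∞) ^ r := by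
      intro y hy
      have h1 : (‖x0 - y‖₊ : ℝ≥0∞) ≤ b := by
        have hd : ‖x0 - y‖ ≤ max R 1 := by
          have h := hR hy
          rw [Metric.mem_closedBall] at h
          calc ‖x0 - y‖ = dist x0 y := (dist_eq_norm _ _).symm
            _ = dist y x0 := dist_comm _ _
            _ ≤ R := h
            _ ≤ max R 1 := le_max_left _ _
        rw [hb, ← ENNReal.ofReal_coe_nnreal, coe_nnnorm]
        exact ENNReal.ofReal_le_ofReal hd
      rw [hr, ENNReal.rpow_neg, ENNReal.rpow_neg]
      have hNn : (0:ℝ) ≤ (N:ℝ) - 1 := by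
        have h2N : (2 : ℝ) ≤ N := by exact_mod_cast hN
        linarith
      exact ENNReal.inv_le_inv.2 (ENNReal.rpow_le_rpow h1 hNn)
    calc b ^ r * ν E = ∫⁻ y in E, b ^ r ∂ν := by rw [setLIntegral_const, mul_comm]
      _ ≤ ∫⁻ y in E, (‖x0 - y‖₊ : ℝ≥0∞) ^ r ∂ν := setLIntegral_mono (by fun_prop) hlb
      _ ≤ ∫⁻ y, (‖x0 - y‖₊ : ℝ≥0∞) ^ r ∂ν := setLIntegral_le_lintegral _ _
      _ ≤ 1 := hpot x0
  have hνEfin : ν E ≠ ∞ := by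
    intro h
    rw [h, ENNReal.mul_top ha0] at h2
    exact (lt_irrefl _ (lt_of_le_of_lt h2 ENNReal.one_lt_top)).elim
  -- restricted measure
  set ν' := ν.restrict E with hν'
  haveI : IsFiniteMeasure ν' := by
    constructor
    rw [hν', Measure.restrict_apply_univ]
    exact hνEfin.lt_top
  -- pointwise lower bound on the potential of tv on E
  have hpt : ∀ x ∈ E, ENNReal.ofReal t ≤ ∫⁻ y, (‖x - y‖₊ : ℝ≥0∞) ^ r ∂tv := by
    intro x hx
    obtain ⟨hint, hlt⟩ := hEA hx
    have hnn : ∀ y, 0 ≤ ‖x - y‖ ^ r := fun y => Real.rpow_nonneg (norm_nonneg _) r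
    -- integrability wrt each part
    have htveq : tv = μ.toJordanDecomposition.posPart + μ.toJordanDecomposition.negPart := rfl
    rw [htveq, integrable_add_measure] at hint
    obtain ⟨hip, hin⟩ := hint
    have habs : |(∫ y, ‖x - y‖ ^ r ∂μ.toJordanDecomposition.posPart)
        - ∫ y, ‖x - y‖ ^ r ∂μ.toJordanDecomposition.negPart| ≤ ∫ y, ‖x - y‖ ^ r ∂tv := by
      have h1 : (0:ℝ) ≤ ∫ y, ‖x - y‖ ^ r ∂μ.toJordanDecomposition.posPart :=
        integral_nonneg fun y => hnn y
      have h2 : (0:ℝ) ≤ ∫ y, ‖x - y‖ ^ r ∂μ.toJordanDecomposition.negPart :=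
        integral_nonneg fun y => hnn y
      rw [htveq, integral_add_measure hip hin]
      rw [abs_sub_le_iff]
      constructor <;> linarith
    have ht' : t ≤ ∫ y, ‖x - y‖ ^ r ∂tv := le_trans (le_of_lt hlt) habs
    calc ENNReal.ofReal t ≤ ENNReal.ofReal (∫ y, ‖x - y‖ ^ r ∂tv) :=
          ENNReal.ofReal_le_ofReal ht'
      _ = ∫⁻ y, ENNReal.ofReal (‖x - y‖ ^ r) ∂tv := by
          rw [ofReal_integral_eq_lintegral_ofReal
            (by rw [htveq]; exact integrable_add_measure.mpr ⟨hip, hin⟩)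
            (Filter.Eventually.of_forall hnn)]
      _ ≤ ∫⁻ y, (‖x - y‖₊ : ℝ≥0∞) ^ r ∂tv := by
          refine lintegral_mono fun y => ?_
          rcases eq_or_lt_of_le (norm_nonneg (x - y)) with h0 | h0
          · rw [← h0, Real.zero_rpow hrneg.ne, ENNReal.ofReal_zero]
            exact zero_le
          · rw [← ENNReal.ofReal_rpow_of_pos h0, ← coe_nnnorm, ENNReal.ofReal_coe_nnreal]
  -- main chain
  calc ENNReal.ofReal t * ν E
      = ∫⁻ x in E, ENNReal.ofReal t ∂ν := by rw [setLIntegral_const, mul_comm]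
    _ ≤ ∫⁻ x in E, (∫⁻ y, (‖x - y‖₊ : ℝ≥0∞) ^ r ∂tv) ∂ν := by
        refine setLIntegral_mono ?_ hpt
        exact hK.lintegral_prod_right'
    _ = ∫⁻ x, (∫⁻ y, (‖x - y‖₊ : ℝ≥0∞) ^ r ∂tv) ∂ν' := rfl
    _ = ∫⁻ y, (∫⁻ x, (‖x - y‖₊ : ℝ≥0∞) ^ r ∂ν') ∂tv := by
        exact lintegral_lintegral_swap (by fun_prop)
    _ ≤ ∫⁻ y, 1 ∂tv := by
        refine lintegral_mono fun y => ?_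
        calc ∫⁻ x, (‖x - y‖₊ : ℝ≥0∞) ^ r ∂ν'
            ≤ ∫⁻ x, (‖x - y‖₊ : ℝ≥0∞) ^ r ∂ν := lintegral_mono' Measure.restrict_le_self le_rfl
          _ = ∫⁻ x, (‖y - x‖₊ : ℝ≥0∞) ^ r ∂ν := by
              congr 1; ext x; rw [← neg_sub, nnnorm_neg]
          _ ≤ 1 := hpot y
    _ = tv Set.univ := by rw [lintegral_one]
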